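/- arXiv:1205.0037 — 2 statements merged into one kernel-verified Lean document; each statement's English description precedes it below -/
import Mathlib

section
/- Let r ≥ 2 and let s_1, ..., s_r be integers with s_j ≥ 2 for each j. Then ∏_{j=1}^r ζ(s_j) = ∑_{j=1}^r ∑_{(a_k)_{k≠j}, 0 ≤ a_k ≤ s_k − 1} M_j · T_{r−1}(s_1 − a_1, ..., ŝ_j, ..., s_r − a_r, s_j + A_j), where ζ denotes the Riemann zeta function, the hat denotes omission of the j-th entry, A_j := ∑_{k≠j} a_k, and M_j := (s_j + A_j − 1)! / ((s_j − 1)! · ∏_{k≠j} a_k!). -/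
open Finset ENNReal

/-- The Riemann zeta value `ζ(s) = ∑_{n=1}^∞ n^{-s}` for a natural number exponent. -/
noncomputable def zetaVal (s : ℕ) : ℝ :=
  ∑' n : ℕ, 1 / ((n : ℝ) + 1) ^ s

/-- The term of the auxiliary series
`T_l(t_1, …, t_r) = ∑_{m_1, …, m_r ≥ 1} (∏_{k ≤ l} m_k^{-t_k})(∏_{k > l} n_k^{-t_k})`
where `n_k = m_1 + ⋯ + m_k` (here `k : Fin r` is 0-indexed, so the first `l`
coordinates are the `m`-type factors). -/
noncomputable def Tlterm (r l : ℕ) (t : Fin r → ℕ)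
    (m : {m : Fin r → ℕ // ∀ j, 0 < m j}) : ℝ :=
  ∏ k : Fin r,
    if (k : ℕ) < l then 1 / ((m.1 k : ℝ) ^ t k)
    else 1 / (((∑ j ∈ Finset.univ.filter (fun j : Fin r => j ≤ k), m.1 j : ℕ) : ℝ) ^ t k)

/-- The value `T_l(t_1, …, t_r)`. -/
noncomputable def Tl (r l : ℕ) (t : Fin r → ℕ) : ℝ :=
  ∑' m, Tlterm r l t m

/-! ### Combinatorial core: the multinomial partial-fraction identity -/

noncomputable def mufac {r : ℕ} (b : Fin r → ℕ) : ℝ :=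
  (Nat.factorial (∑ k, b k) : ℝ) / ∏ k, (Nat.factorial (b k) : ℝ)

lemma mufac_zero {r : ℕ} : mufac (fun _ : Fin r => 0) = 1 := by
  simp [mufac]

lemma prod_fact_pos {r : ℕ} (b : Fin r → ℕ) : 0 < ∏ k, (Nat.factorial (b k) : ℝ) :=
  Finset.prod_pos fun k _ => by exact_mod_cast (Nat.factorial_pos _)

lemma mufac_nonneg {r : ℕ} (b : Fin r → ℕ) : 0 ≤ mufac b := by
  unfold mufac
  positivity

lemma sum_update_sub {r : ℕ} (b : Fin r → ℕ) (i : Fin r) (hi : 1 ≤ b i) :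
    ∑ k, Function.update b i (b i - 1) k = ∑ k, b k - 1 := by
  rw [Finset.sum_update_of_mem (Finset.mem_univ i), Finset.sdiff_singleton_eq_erase]
  have h : ∑ k, b k = b i + ∑ x ∈ univ.erase i, b x :=
    (Finset.add_sum_erase _ b (Finset.mem_univ i)).symm
  omega

lemma mufac_update {r : ℕ} (b : Fin r → ℕ) (i : Fin r) (hi : 1 ≤ b i) :
    mufac (Function.update b i (b i - 1)) =
      (Nat.factorial (∑ k, b k - 1) : ℝ) * (b i : ℝ) / ∏ k, (Nat.factorial (b k) : ℝ) := by
  have h1 : ∏ k, (Nat.factorial (Function.update b i (b i - 1) k) : ℝ)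
      = ((b i - 1).factorial : ℝ) * ∏ k ∈ univ.erase i, (Nat.factorial (b k) : ℝ) := by
    rw [← Finset.mul_prod_erase _ _ (Finset.mem_univ i)]
    congr 1
    · simp
    · exact Finset.prod_congr rfl fun k hk => by
        rw [Function.update_of_ne (Finset.mem_erase.mp hk).1]
  have h2 : ∏ k, (Nat.factorial (b k) : ℝ)
      = ((b i).factorial : ℝ) * ∏ k ∈ univ.erase i, (Nat.factorial (b k) : ℝ) :=
    (Finset.mul_prod_erase _ _ (Finset.mem_univ i)).symm
  have hbfac : ((b i).factorial : ℝ) = (b i : ℝ) * ((b i - 1).factorial : ℝ) := by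
    exact_mod_cast (Nat.mul_factorial_pred (by omega : b i ≠ 0)).symm
  have hpe : 0 < ∏ k ∈ univ.erase i, (Nat.factorial (b k) : ℝ) :=
    Finset.prod_pos fun k _ => by exact_mod_cast (Nat.factorial_pos _)
  have hb1 : (0:ℝ) < ((b i - 1).factorial : ℝ) := by exact_mod_cast (Nat.factorial_pos _)
  have hbi : (0:ℝ) < (b i : ℝ) := by exact_mod_cast hi
  rw [mufac, sum_update_sub b i hi, h1, h2, hbfac]
  field_simp

lemma mufac_pascal {r : ℕ} (b : Fin r → ℕ) (hb : 1 ≤ ∑ k, b k) :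
    mufac b = ∑ i, (if 1 ≤ b i then mufac (Function.update b i (b i - 1)) else 0) := by
  have h : ∀ i : Fin r, (if 1 ≤ b i then mufac (Function.update b i (b i - 1)) else 0)
      = (Nat.factorial (∑ k, b k - 1) : ℝ) * (b i : ℝ) / ∏ k, (Nat.factorial (b k) : ℝ) := by
    intro i
    by_cases h : 1 ≤ b i
    · rw [if_pos h, mufac_update b i h]
    · rw [if_neg h]
      have : b i = 0 := by omega
      rw [this]
      simp
  rw [Finset.sum_congr rfl fun i _ => h i, ← Finset.sum_div, ← Finset.mul_sum]
  rw [mufac]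
  congr 1
  have hcast : ((∑ k, b k : ℕ) : ℝ) = ∑ i, (b i : ℝ) := by push_cast; ring
  rw [← hcast]
  have h2 : (∑ k, b k) = (∑ k, b k - 1) + 1 := by omega
  rw [h2]
  push_cast [Nat.factorial_succ]
  ring

def boxS {r : ℕ} (s : Fin r → ℕ) : Finset (Fin r → ℕ) :=
  Fintype.piFinset fun k => Finset.range (s k)

lemma mem_boxS {r : ℕ} {s : Fin r → ℕ} {b : Fin r → ℕ} :
    b ∈ boxS s ↔ ∀ k, b k < s k := by
  simp [boxS, Fintype.mem_piFinset]

lemma prod_pow_update {r : ℕ} (p : Fin r → ℝ) (b : Fin r → ℕ) (j : Fin r) (v : ℕ) :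
    ∏ k, p k ^ (Function.update b j v k) = p j ^ v * ∏ k ∈ univ.erase j, p k ^ b k := by
  have h : (fun k => p k ^ (Function.update b j v k))
      = Function.update (fun k => p k ^ b k) j (p j ^ v) := by
    funext k
    by_cases hk : k = j
    · subst hk; simp
    · simp [Function.update_of_ne hk]
  rw [h, ← Finset.mul_prod_erase _ _ (Finset.mem_univ j), Function.update_self]
  congr 1
  exact Finset.prod_congr rfl fun k hk => by
    rw [Function.update_of_ne (Finset.mem_erase.mp hk).1]

lemma prod_pow_split {r : ℕ} (p : Fin r → ℝ) (b : Fin r → ℕ) (j : Fin r) :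
    ∏ k, p k ^ b k = p j ^ b j * ∏ k ∈ univ.erase j, p k ^ b k :=
  (Finset.mul_prod_erase _ _ (Finset.mem_univ j)).symm
lemma step_j {r : ℕ} (s : Fin r → ℕ) (p : Fin r → ℝ) (j : Fin r) (hs : ∀ k, 1 ≤ s k) :
    (∑ b ∈ boxS s, mufac b * ∏ k, p k ^ b k) * p j
    = (∑ b ∈ (boxS s).filter (fun b => b j + 1 = s j), mufac b * p j * ∏ k, p k ^ b k)
      + ∑ b ∈ boxS s,
          (if 1 ≤ b j then mufac (Function.update b j (b j - 1)) else 0) * ∏ k, p k ^ b k := by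
  classical
  set Sj : Finset (Fin r → ℕ) :=
    Fintype.piFinset fun k => Finset.range (if k = j then s j + 1 else s k) with hSj
  set F : (Fin r → ℕ) → ℝ :=
    fun b' => mufac (Function.update b' j (b' j - 1)) * ∏ k, p k ^ b' k with hF
  -- the shift maps
  have hmem_up : ∀ b ∈ boxS s, Function.update b j (b j + 1) ∈ Sj := by
    intro b hb
    rw [mem_boxS] at hb
    rw [hSj, Fintype.mem_piFinset]
    intro k
    rw [Finset.mem_range, Function.update_apply]
    have hbk := hb k
    have hbj := hb j
    split_ifs with hk
    · subst hk; omega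
    · omega
  have hmem_down : ∀ b' ∈ Sj.filter (fun b' => 1 ≤ b' j),
      Function.update b' j (b' j - 1) ∈ boxS s := by
    intro b' hb'
    rw [Finset.mem_filter] at hb'
    obtain ⟨hb', hb'j⟩ := hb'
    rw [hSj, Fintype.mem_piFinset] at hb'
    rw [mem_boxS]
    intro k
    rw [Function.update_apply]
    have hbk := hb' k
    rw [Finset.mem_range] at hbk
    split_ifs at hbk ⊢ with hk
    · subst hk; omega
    · omega
  have hleft : ∀ b ∈ boxS s,
      Function.update (Function.update b j (b j + 1)) j
        (Function.update b j (b j + 1) j - 1) = b := by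
    intro b _
    simp [Function.update_idem]
  have hright : ∀ b' ∈ Sj.filter (fun b' => 1 ≤ b' j),
      Function.update (Function.update b' j (b' j - 1)) j
        (Function.update b' j (b' j - 1) j + 1) = b' := by
    intro b' hb'
    rw [Finset.mem_filter] at hb'
    have : b' j - 1 + 1 = b' j := by omega
    simp [Function.update_idem, this]
  have hterm : ∀ b ∈ boxS s,
      mufac b * (∏ k, p k ^ b k) * p j = F (Function.update b j (b j + 1)) := by
    intro b _
    rw [hF]
    simp only [Function.update_self, Function.update_idem, Nat.add_sub_cancel,
      Function.update_eq_self]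
    rw [prod_pow_update, prod_pow_split p b j, pow_succ]
    ring
  -- Move 1
  have move1 : (∑ b ∈ boxS s, mufac b * ∏ k, p k ^ b k) * p j
      = ∑ b' ∈ Sj.filter (fun b' => 1 ≤ b' j), F b' := by
    rw [Finset.sum_mul]
    exact Finset.sum_nbij' (fun b => Function.update b j (b j + 1))
      (fun b' => Function.update b' j (b' j - 1))
      (fun b hb => Finset.mem_filter.mpr ⟨hmem_up b hb, by simp⟩)
      hmem_down hleft hright hterm
  -- split the filtered sum
  have move2 : ∑ b' ∈ Sj.filter (fun b' => 1 ≤ b' j), F b'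
      = (∑ b' ∈ Sj, if b' j = s j then F b' else 0)
        + ∑ b' ∈ Sj, if 1 ≤ b' j ∧ b' j ≠ s j then F b' else 0 := by
    rw [Finset.sum_filter, ← Finset.sum_add_distrib]
    refine Finset.sum_congr rfl fun b' _ => ?_
    by_cases h1 : b' j = s j
    · rw [if_pos h1, if_pos (h1 ▸ hs j), if_neg (by simp [h1])]
      ring
    · rw [if_neg h1]
      by_cases h2 : 1 ≤ b' j
      · rw [if_pos h2, if_pos ⟨h2, h1⟩]; ring
      · rw [if_neg h2, if_neg (by tauto)]; ring
  -- Move 3 : the terminating part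
  have move3 : (∑ b' ∈ Sj, if b' j = s j then F b' else 0)
      = ∑ b ∈ (boxS s).filter (fun b => b j + 1 = s j), mufac b * p j * ∏ k, p k ^ b k := by
    rw [← Finset.sum_filter]
    refine (Finset.sum_nbij' (fun b => Function.update b j (b j + 1))
      (fun b' => Function.update b' j (b' j - 1)) ?_ ?_ ?_ ?_ ?_).symm
    · intro b hb
      rw [Finset.mem_filter] at hb ⊢
      exact ⟨hmem_up b hb.1, by simp [hb.2]⟩
    · intro b' hb'
      rw [Finset.mem_filter] at hb' ⊢
      have h1j : 1 ≤ b' j := hb'.2 ▸ hs j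
      refine ⟨hmem_down b' (Finset.mem_filter.mpr ⟨hb'.1, h1j⟩), ?_⟩
      simp only [Function.update_self]
      omega
    · intro b hb
      exact hleft b (Finset.mem_filter.mp hb).1
    · intro b' hb'
      rw [Finset.mem_filter] at hb'
      exact hright b' (Finset.mem_filter.mpr ⟨hb'.1, hb'.2 ▸ hs j⟩)
    · intro b hb
      have := hterm b (Finset.mem_filter.mp hb).1
      rw [← this]; ring
  -- Move 4 : the non-terminating part
  have hset : Sj.filter (fun b' => ¬ b' j = s j) = boxS s := by
    ext b
    rw [Finset.mem_filter, hSj, Fintype.mem_piFinset, mem_boxS]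
    constructor
    · rintro ⟨h1, h2⟩ k
      have := h1 k
      rw [Finset.mem_range] at this
      have hj := h1 j
      rw [Finset.mem_range, if_pos rfl] at hj
      split_ifs at this with hk
      · subst hk; omega
      · exact this
    · intro h
      have hj := h j
      constructor
      · intro k
        have := h k
        rw [Finset.mem_range]
        split_ifs with hk
        · subst hk; omega
        · exact this
      · omega
  have move4 : (∑ b' ∈ Sj, if 1 ≤ b' j ∧ b' j ≠ s j then F b' else 0)
      = ∑ b ∈ boxS s,
          (if 1 ≤ b j then mufac (Function.update b j (b j - 1)) else 0) * ∏ k, p k ^ b k := by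
    have : ∀ b', (if 1 ≤ b' j ∧ b' j ≠ s j then F b' else 0)
        = if ¬ b' j = s j then (if 1 ≤ b' j then F b' else 0) else 0 := by
      intro b'
      by_cases h1 : b' j = s j
      · simp [h1]
      · by_cases h2 : 1 ≤ b' j <;> simp [h1, h2]
    rw [Finset.sum_congr rfl fun b' _ => this b', ← Finset.sum_filter, hset]
    refine Finset.sum_congr rfl fun b _ => ?_
    by_cases h2 : 1 ≤ b j
    · rw [if_pos h2, if_pos h2, hF]
    · rw [if_neg h2, if_neg h2, zero_mul]
  rw [move1, move2, move3, move4]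

lemma norm_sum {r : ℕ} (s : Fin r → ℕ) (hs : ∀ k, 1 ≤ s k) (p : Fin r → ℝ)
    (hp : ∑ k, p k = 1) :
    ∑ j, ∑ b ∈ (boxS s).filter (fun b => b j + 1 = s j),
        mufac b * p j * ∏ k, p k ^ b k = 1 := by
  classical
  set Λ : ℝ := ∑ b ∈ boxS s, mufac b * ∏ k, p k ^ b k with hΛ
  have h1 : ∑ j, (Λ * p j) = Λ := by
    rw [← Finset.mul_sum, hp, mul_one]
  have h2 : ∀ j : Fin r, Λ * p j
      = (∑ b ∈ (boxS s).filter (fun b => b j + 1 = s j), mufac b * p j * ∏ k, p k ^ b k)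
        + ∑ b ∈ boxS s,
            (if 1 ≤ b j then mufac (Function.update b j (b j - 1)) else 0) * ∏ k, p k ^ b k := by
    intro j
    rw [hΛ]
    exact step_j s p j hs
  have h3 : ∑ j, ∑ b ∈ boxS s,
      (if 1 ≤ b j then mufac (Function.update b j (b j - 1)) else 0) * ∏ k, p k ^ b k
      = Λ - 1 := by
    rw [Finset.sum_comm]
    have hterm : ∀ b ∈ boxS s,
        ∑ j, (if 1 ≤ b j then mufac (Function.update b j (b j - 1)) else 0) * ∏ k, p k ^ b k
        = mufac b * ∏ k, p k ^ b k - (if b = (fun _ => 0) then 1 else 0) := by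
      intro b hb
      rw [← Finset.sum_mul]
      by_cases h0 : b = fun _ => 0
      · subst h0
        simp [mufac_zero]
      · have hsum1 : 1 ≤ ∑ k, b k := by
          by_contra hcon
          push_neg at hcon
          apply h0
          funext k
          have : ∑ k, b k = 0 := by omega
          exact Finset.sum_eq_zero_iff.mp this k (Finset.mem_univ k)
        rw [← mufac_pascal b hsum1, if_neg h0, sub_zero]
    rw [Finset.sum_congr rfl hterm, Finset.sum_sub_distrib]
    congr 1
    have h0mem : (fun _ => 0 : Fin r → ℕ) ∈ boxS s := by
      rw [mem_boxS]; intro k; exact hs k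
    rw [Finset.sum_ite_eq' (boxS s) (fun _ => 0 : Fin r → ℕ) (fun _ => 1), if_pos h0mem]
  have h4 : Λ = (∑ j, ∑ b ∈ (boxS s).filter (fun b => b j + 1 = s j),
      mufac b * p j * ∏ k, p k ^ b k) + (Λ - 1) := by
    rw [← h3, ← Finset.sum_add_distrib, ← h1]
    exact Finset.sum_congr rfl fun j _ => h2 j
  linarith

lemma eq_insertNth {n : ℕ} (j : Fin (n + 1)) (b : Fin (n + 1) → ℕ) (v : ℕ) (hv : b j = v) :
    j.insertNth v (fun i => b (j.succAbove i)) = b := by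
  funext k
  by_cases hk : k = j
  · subst hk; rw [Fin.insertNth_apply_same, hv]
  · obtain ⟨i, rfl⟩ := Fin.exists_succAbove_eq hk
    rw [Fin.insertNth_apply_succAbove]

lemma insertNth_lt {n : ℕ} (j : Fin (n + 1)) (s : Fin (n + 1) → ℕ) (v : ℕ) (w : Fin n → ℕ)
    (hv : v < s j) (hw : ∀ i, w i < s (j.succAbove i)) :
    ∀ k, (j.insertNth (α := fun _ => ℕ) v w) k < s k := by
  intro k
  by_cases hk : k = j
  · subst hk; rw [Fin.insertNth_apply_same]; exact hv
  · obtain ⟨i, rfl⟩ := Fin.exists_succAbove_eq hk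
    rw [Fin.insertNth_apply_succAbove]; exact hw i

lemma filter_sum_eq_pi {d : ℕ} (s : Fin (d + 2) → ℕ) (hs : ∀ k, 1 ≤ s k) (j : Fin (d + 2))
    (f : (Fin (d + 2) → ℕ) → ℝ) :
    ∑ b ∈ (boxS s).filter (fun b => b j + 1 = s j), f b
    = ∑ a : (∀ i : Fin (d + 1), Fin (s (j.succAbove i))),
        f (j.insertNth (s j - 1) (fun i => (a i : ℕ))) := by
  classical
  refine Finset.sum_bij'
    (i := fun b (hb : b ∈ (boxS s).filter (fun b => b j + 1 = s j)) =>
      fun i => (⟨b (j.succAbove i), by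
        exact mem_boxS.mp (Finset.mem_filter.mp hb).1 (j.succAbove i)⟩ :
          Fin (s (j.succAbove i))))
    (j := fun a _ => j.insertNth (s j - 1) (fun i => (a i : ℕ)))
    (fun b hb => Finset.mem_univ _) ?_ ?_ ?_ ?_
  · intro a _
    simp only [Finset.mem_filter, mem_boxS]
    have hvj : s j - 1 < s j := by have := hs j; omega
    refine ⟨insertNth_lt j s _ _ hvj (fun i => (a i).isLt), ?_⟩
    rw [Fin.insertNth_apply_same]
    have := hs j; omega
  · intro b hb
    have hbj : b j = s j - 1 := by
      have := (Finset.mem_filter.mp hb).2; omega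
    exact eq_insertNth j b _ hbj
  · intro a _
    funext i
    apply Fin.val_injective
    simp [Fin.insertNth_apply_succAbove]
  · intro b hb
    have hbj : b j = s j - 1 := by
      have := (Finset.mem_filter.mp hb).2; omega
    rw [show (fun i => ((⟨b (j.succAbove i), mem_boxS.mp (Finset.mem_filter.mp hb).1
        (j.succAbove i)⟩ : Fin (s (j.succAbove i))) : ℕ)) = fun i => b (j.succAbove i) from rfl]
    rw [eq_insertNth j b _ hbj]

lemma term_alg {n : ℕ} (xj X : ℝ) (hxj : 0 < xj) (hX : 0 < X) (m : ℕ)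
    (y : Fin n → ℝ) (hy : ∀ i, 0 < y i) (cc aa : Fin n → ℕ) (M : ℝ) :
    ((1 / xj ^ (m + 1)) * ∏ i, 1 / y i ^ (cc i + aa i))
      * (M * (xj / X) * ((xj / X) ^ m * ∏ i, (y i / X) ^ (aa i)))
    = M * (∏ i, 1 / y i ^ (cc i)) * (1 / X ^ ((m + 1) + ∑ i, aa i)) := by
  have h1 : ∏ i, 1 / y i ^ (cc i + aa i)
      = (∏ i, 1 / y i ^ cc i) * ∏ i, 1 / y i ^ aa i := by
    rw [← Finset.prod_mul_distrib]
    exact Finset.prod_congr rfl fun i _ => by rw [pow_add]; ring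
  have h2 : ∏ i, (y i / X) ^ aa i = (∏ i, y i ^ aa i) / X ^ (∑ i, aa i) := by
    rw [← Finset.prod_pow_eq_pow_sum, ← Finset.prod_div_distrib]
    exact Finset.prod_congr rfl fun i _ => by rw [div_pow]
  have hPc : (0:ℝ) < ∏ i, y i ^ cc i := Finset.prod_pos fun i _ => pow_pos (hy i) _
  have hPa : (0:ℝ) < ∏ i, y i ^ aa i := Finset.prod_pos fun i _ => pow_pos (hy i) _
  have hPia : ∏ i, 1 / y i ^ aa i = 1 / ∏ i, y i ^ aa i := by
    rw [one_div, ← Finset.prod_inv_distrib]; exact Finset.prod_congr rfl fun i _ => (one_div _)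
  have hPic : ∏ i, 1 / y i ^ cc i = 1 / ∏ i, y i ^ cc i := by
    rw [one_div, ← Finset.prod_inv_distrib]; exact Finset.prod_congr rfl fun i _ => (one_div _)
  rw [h1, h2, hPia, hPic]
  rw [pow_add, pow_add, pow_succ, div_pow]
  field_simp
  ring

lemma core {d : ℕ} (s : Fin (d + 2) → ℕ) (hs : ∀ k, 1 ≤ s k) (x : Fin (d + 2) → ℝ)
    (hx : ∀ k, 0 < x k) :
    ∏ k, (1 / x k ^ s k)
    = ∑ j, ∑ a : (∀ i : Fin (d + 1), Fin (s (j.succAbove i))),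
        mufac (j.insertNth (s j - 1) (fun i => (a i : ℕ)))
        * (∏ i, (1 / x (j.succAbove i) ^ (s (j.succAbove i) - (a i : ℕ))))
        * (1 / (∑ k, x k) ^ (s j + ∑ i, (a i : ℕ))) := by
  classical
  have hX : (0:ℝ) < ∑ k, x k := Finset.sum_pos (fun k _ => hx k) Finset.univ_nonempty
  set X := ∑ k, x k with hXdef
  set p : Fin (d + 2) → ℝ := fun k => x k / X with hpdef
  have hp : ∑ k, p k = 1 := by
    rw [hpdef, ← Finset.sum_div, ← hXdef, div_self hX.ne']
  have h0 := norm_sum s hs p hp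
  have h0' : ∑ j, ∑ a : (∀ i : Fin (d + 1), Fin (s (j.succAbove i))),
      (mufac (j.insertNth (s j - 1) (fun i => (a i : ℕ))) * p j *
        ∏ k, p k ^ (j.insertNth (s j - 1) (fun i => (a i : ℕ)) k)) = 1 := by
    rw [← h0]
    exact Finset.sum_congr rfl fun j _ =>
      (filter_sum_eq_pi s hs j (fun b => mufac b * p j * ∏ k, p k ^ b k)).symm
  calc ∏ k, (1 / x k ^ s k)
      = (∏ k, (1 / x k ^ s k)) *
        (∑ j, ∑ a : (∀ i : Fin (d + 1), Fin (s (j.succAbove i))),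
          (mufac (j.insertNth (s j - 1) (fun i => (a i : ℕ))) * p j *
            ∏ k, p k ^ (j.insertNth (s j - 1) (fun i => (a i : ℕ)) k))) := by
        rw [h0', mul_one]
    _ = _ := by
        rw [Finset.mul_sum]
        refine Finset.sum_congr rfl fun j _ => ?_
        rw [Finset.mul_sum]
        refine Finset.sum_congr rfl fun a _ => ?_
        set b : Fin (d + 2) → ℕ := j.insertNth (s j - 1) (fun i => (a i : ℕ)) with hbdef
        have hbj : b j = s j - 1 := Fin.insertNth_apply_same _ _ _
        have hbi : ∀ i, b (j.succAbove i) = (a i : ℕ) := fun i =>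
          Fin.insertNth_apply_succAbove _ _ _ _
        have hsj : s j = (s j - 1) + 1 := by have := hs j; omega
        have hsi : ∀ i, s (j.succAbove i) = (s (j.succAbove i) - (a i : ℕ)) + (a i : ℕ) := by
          intro i; have := (a i).isLt; omega
        rw [Fin.prod_univ_succAbove (fun k => 1 / x k ^ s k) j,
            Fin.prod_univ_succAbove (fun k => p k ^ b k) j, hbj]
        simp only [hbi]
        rw [Finset.prod_congr rfl (fun i (_ : i ∈ univ) =>
          congrArg (fun e => (1:ℝ) / x (j.succAbove i) ^ e) (hsi i))]
        rw [congrArg (fun e => (1:ℝ) / x j ^ e) hsj]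
        rw [hpdef]
        simp only
        rw [term_alg (x j) X (hx j) hX (s j - 1) (fun i => x (j.succAbove i))
          (fun i => hx _) (fun i => s (j.succAbove i) - (a i : ℕ)) (fun i => (a i : ℕ))
          (mufac b)]
        exact congrArg
          (fun e => mufac b * (∏ i, 1 / x (j.succAbove i) ^ (s (j.succAbove i) - (a i : ℕ)))
            * (1 / X ^ e)) (by omega : (s j - 1 + 1) + ∑ i, (a i : ℕ) = s j + ∑ i, (a i : ℕ))

lemma prod_tsum_ennreal : ∀ (n : ℕ) (f : Fin n → ℕ → ℝ≥0∞),
    ∏ j, ∑' m, f j m = ∑' g : Fin n → ℕ, ∏ j, f j (g j) := by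
  intro n
  induction n with
  | zero =>
    intro f
    simp only [Finset.univ_eq_empty, Finset.prod_empty]
    rw [tsum_eq_single (fun i => i.elim0)
      (fun g hg => absurd (funext fun i : Fin 0 => i.elim0) hg)]
  | succ n ih =>
    intro f
    rw [Fin.prod_univ_succ, ih (fun j => f j.succ)]
    have h1 : ∀ (a : ℕ) (b : Fin n → ℕ),
        ∏ j, f j ((Fin.consEquiv (fun _ : Fin (n + 1) => ℕ)) (a, b) j)
          = f 0 a * ∏ j, f j.succ (b j) := by
      intro a b
      rw [Fin.prod_univ_succ]
      simp [Fin.consEquiv]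
    calc (∑' m, f 0 m) * (∑' g : Fin n → ℕ, ∏ j, f j.succ (g j))
        = ∑' a, f 0 a * (∑' g : Fin n → ℕ, ∏ j, f j.succ (g j)) := ENNReal.tsum_mul_right.symm
      _ = ∑' a, ∑' b : Fin n → ℕ, (f 0 a * ∏ j, f j.succ (b j)) :=
          tsum_congr fun a => ENNReal.tsum_mul_left.symm
      _ = ∑' a, ∑' b : Fin n → ℕ,
            ∏ j, f j ((Fin.consEquiv (fun _ : Fin (n + 1) => ℕ)) (a, b) j) :=
          tsum_congr fun a => tsum_congr fun b => (h1 a b).symm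
      _ = ∑' p : ℕ × (Fin n → ℕ),
            ∏ j, f j ((Fin.consEquiv (fun _ : Fin (n + 1) => ℕ)) p j) := by
          rw [ENNReal.tsum_prod']
      _ = ∑' g : Fin (n + 1) → ℕ, ∏ j, f j (g j) :=
          Equiv.tsum_eq (Fin.consEquiv (fun _ : Fin (n + 1) => ℕ))
            (fun g : Fin (n + 1) → ℕ => ∏ j, f j (g j))

noncomputable def ZE (s : ℕ) : ℝ≥0∞ := ∑' n : ℕ, 1 / ((n : ℝ≥0∞) + 1) ^ s

lemma ZE_term_eq (s n : ℕ) :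
    (1 : ℝ≥0∞) / ((n : ℝ≥0∞) + 1) ^ s = ENNReal.ofReal (1 / ((n : ℝ) + 1) ^ s) := by
  have h : (0:ℝ) < ((n : ℝ) + 1) ^ s := pow_pos (by positivity) _
  rw [one_div, one_div, ENNReal.ofReal_inv_of_pos h, ENNReal.ofReal_pow (by positivity)]
  congr
  rw [ENNReal.ofReal_add (by positivity) zero_le_one, ENNReal.ofReal_natCast,
    ENNReal.ofReal_one]

lemma ZE_term_ne_top (s n : ℕ) : (1 : ℝ≥0∞) / ((n : ℝ≥0∞) + 1) ^ s ≠ ⊤ := by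
  rw [one_div, Ne, ENNReal.inv_eq_top]
  exact pow_ne_zero _ (by simp)

lemma ZE_term_toReal (s n : ℕ) :
    ((1 : ℝ≥0∞) / ((n : ℝ≥0∞) + 1) ^ s).toReal = 1 / ((n : ℝ) + 1) ^ s := by
  rw [ZE_term_eq, ENNReal.toReal_ofReal (by positivity)]

lemma zetaVal_eq (s : ℕ) : zetaVal s = (ZE s).toReal := by
  rw [zetaVal, ZE, ENNReal.tsum_toReal_eq (fun n => ZE_term_ne_top s n)]
  exact tsum_congr fun n => (ZE_term_toReal s n).symm

lemma summable_aux : Summable (fun n : ℕ => 1 / ((n : ℝ) + 1) ^ 2) := by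
  have h2 : Summable (fun n : ℕ => 1 / (n : ℝ) ^ 2) := Real.summable_one_div_nat_pow.mpr one_lt_two
  have := (summable_nat_add_iff 1).mpr h2
  refine this.congr fun n => ?_
  push_cast
  ring

lemma ZE_ne_top (s : ℕ) (hs : 2 ≤ s) : ZE s ≠ ⊤ := by
  have hle : ZE s ≤ ZE 2 := by
    refine Summable.tsum_le_tsum (fun n => ?_) ENNReal.summable ENNReal.summable
    rw [one_div, one_div]
    refine ENNReal.inv_le_inv.mpr ?_
    exact pow_le_pow_right₀ (by simp : (1:ℝ≥0∞) ≤ (n : ℝ≥0∞) + 1) hs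
  have h2 : ZE 2 ≠ ⊤ := by
    rw [ZE, tsum_congr (fun n => ZE_term_eq 2 n),
      ← ENNReal.ofReal_tsum_of_nonneg (fun n => by positivity) summable_aux]
    exact ENNReal.ofReal_ne_top
  exact fun h => h2 (top_le_iff.mp (h ▸ hle))

noncomputable def TlEterm (r l : ℕ) (t : Fin r → ℕ)
    (m : {m : Fin r → ℕ // ∀ j, 0 < m j}) : ℝ≥0∞ :=
  ∏ k : Fin r,
    if (k : ℕ) < l then 1 / ((m.1 k : ℝ≥0∞) ^ t k)
    else 1 / (((∑ j ∈ Finset.univ.filter (fun j : Fin r => j ≤ k), m.1 j : ℕ) : ℝ≥0∞) ^ t k)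

lemma toReal_one_div_nat_pow (c e : ℕ) :
    ((1:ℝ≥0∞) / (c:ℝ≥0∞) ^ e).toReal = 1 / (c:ℝ) ^ e := by
  rw [one_div, one_div, ENNReal.toReal_inv, ENNReal.toReal_pow, ENNReal.toReal_natCast]

lemma TlEterm_ne_top (r l : ℕ) (t : Fin r → ℕ) (m : {m : Fin r → ℕ // ∀ j, 0 < m j}) :
    TlEterm r l t m ≠ ⊤ := by
  rw [TlEterm]
  refine (ENNReal.prod_lt_top ?_).ne
  intro k _
  have hk : (0:ℝ≥0∞) < (m.1 k : ℝ≥0∞) := by exact_mod_cast m.2 k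
  split_ifs
  · rw [one_div]
    exact ENNReal.inv_lt_top.mpr (ENNReal.pow_pos hk _)
  · rw [one_div]
    refine ENNReal.inv_lt_top.mpr (ENNReal.pow_pos ?_ _)
    have hmem : k ∈ univ.filter (fun j : Fin r => j ≤ k) := by
      simp [Finset.mem_filter]
    have hle : m.1 k ≤ ∑ j ∈ univ.filter (fun j : Fin r => j ≤ k), m.1 j :=
      Finset.single_le_sum (fun j _ => Nat.zero_le _) hmem
    have : 0 < ∑ j ∈ univ.filter (fun j : Fin r => j ≤ k), m.1 j := lt_of_lt_of_le (m.2 k) hle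
    exact_mod_cast this

lemma Tlterm_eq (r l : ℕ) (t : Fin r → ℕ) (m : {m : Fin r → ℕ // ∀ j, 0 < m j}) :
    Tlterm r l t m = (TlEterm r l t m).toReal := by
  rw [Tlterm, TlEterm, ENNReal.toReal_prod]
  refine Finset.prod_congr rfl fun k _ => ?_
  split_ifs
  · rw [toReal_one_div_nat_pow]
  · rw [toReal_one_div_nat_pow]

lemma Tl_eq (r l : ℕ) (t : Fin r → ℕ) :
    Tl r l t = (∑' m, TlEterm r l t m).toReal := by
  rw [Tl, ENNReal.tsum_toReal_eq (fun m => TlEterm_ne_top r l t m)]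
  exact tsum_congr fun m => Tlterm_eq r l t m

def permf (d : ℕ) (j : Fin (d + 2)) : Fin (d + 2) → Fin (d + 2) :=
  Fin.snoc (fun i : Fin (d + 1) => j.succAbove i) j

lemma permf_surj (d : ℕ) (j : Fin (d + 2)) : Function.Surjective (permf d j) := by
  intro y
  by_cases hy : y = j
  · exact ⟨Fin.last (d + 1), by rw [permf, Fin.snoc_last, hy]⟩
  · obtain ⟨i, hi⟩ := Fin.exists_succAbove_eq hy
    exact ⟨Fin.castSucc i, by rw [permf, Fin.snoc_castSucc]; exact hi⟩

noncomputable def permE (d : ℕ) (j : Fin (d + 2)) : Fin (d + 2) ≃ Fin (d + 2) :=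
  Equiv.ofBijective _ ((permf_surj d j).bijective_of_finite)

lemma permE_apply (d : ℕ) (j : Fin (d + 2)) (k : Fin (d + 2)) :
    permE d j k = permf d j k := rfl

noncomputable def posEquiv (d : ℕ) (j : Fin (d + 2)) :
    (Fin (d + 2) → ℕ) ≃ {m : Fin (d + 2) → ℕ // ∀ k, 0 < m k} where
  toFun n := ⟨fun k => n (permE d j k) + 1, fun k => Nat.succ_pos _⟩
  invFun m := fun y => m.1 ((permE d j).symm y) - 1
  left_inv n := by
    funext y
    simp only [Equiv.apply_symm_apply]
    omega
  right_inv m := by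
    apply Subtype.ext
    funext k
    simp only [Equiv.symm_apply_apply]
    have := m.2 k
    omega

lemma posEquiv_fst (d : ℕ) (j : Fin (d + 2)) (n : Fin (d + 2) → ℕ) (k : Fin (d + 2)) :
    ((posEquiv d j) n).1 k = n (permf d j k) + 1 := rfl

lemma TlEterm_posEquiv (d : ℕ) (j : Fin (d + 2)) (t : Fin (d + 2) → ℕ) (n : Fin (d + 2) → ℕ) :
    TlEterm (d + 2) (d + 1) t ((posEquiv d j) n)
    = (∏ i : Fin (d + 1), 1 / ((n (j.succAbove i) : ℝ≥0∞) + 1) ^ t i.castSucc)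
      * (1 / ((∑ k, ((n k : ℝ≥0∞) + 1)) ^ t (Fin.last (d + 1)))) := by
  rw [TlEterm, Fin.prod_univ_castSucc]
  congr 1
  · refine Finset.prod_congr rfl fun i _ => ?_
    rw [if_pos (by simpa using i.isLt : ((Fin.castSucc i : Fin (d + 2)) : ℕ) < d + 1)]
    have h1 : ((posEquiv d j) n).1 (Fin.castSucc i) = n (j.succAbove i) + 1 := by
      rw [posEquiv_fst, permf, Fin.snoc_castSucc]
    rw [h1]
    push_cast
    rfl
  · rw [if_neg (by simp : ¬ ((Fin.last (d + 1) : Fin (d + 2)) : ℕ) < d + 1)]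
    have hfil : univ.filter (fun j' : Fin (d + 2) => j' ≤ Fin.last (d + 1)) = univ :=
      Finset.filter_true_of_mem fun x _ => Fin.le_last x
    rw [hfil]
    have hsum : ∑ k, ((posEquiv d j) n).1 k = ∑ k, (n k + 1) := by
      have : ∀ k, ((posEquiv d j) n).1 k = n (permE d j k) + 1 := fun k => rfl
      rw [Finset.sum_congr rfl fun k _ => this k]
      exact Equiv.sum_comp (permE d j) (fun k => n k + 1)
    rw [hsum]
    push_cast
    rfl

lemma ofReal_one_div_pow {x : ℝ} (hx : 0 < x) (e : ℕ) :
    ENNReal.ofReal (1 / x ^ e) = 1 / (ENNReal.ofReal x) ^ e := by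
  rw [one_div, one_div, ENNReal.ofReal_inv_of_pos (pow_pos hx e), ENNReal.ofReal_pow hx.le]

lemma ofReal_natp (c : ℕ) : ENNReal.ofReal ((c : ℝ) + 1) = (c : ℝ≥0∞) + 1 := by
  rw [ENNReal.ofReal_add (by positivity) zero_le_one, ENNReal.ofReal_natCast,
    ENNReal.ofReal_one]

lemma core_lift {d : ℕ} (s : Fin (d + 2) → ℕ) (hs : ∀ k, 1 ≤ s k) (g : Fin (d + 2) → ℕ) :
    ∏ k, 1 / ((g k : ℝ≥0∞) + 1) ^ s k
    = ∑ j, ∑ a : (∀ i : Fin (d + 1), Fin (s (j.succAbove i))),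
        ENNReal.ofReal (mufac (j.insertNth (s j - 1) (fun i => (a i : ℕ))))
        * ((∏ i, 1 / ((g (j.succAbove i) : ℝ≥0∞) + 1) ^ (s (j.succAbove i) - (a i : ℕ)))
           * (1 / (∑ k, ((g k : ℝ≥0∞) + 1)) ^ (s j + ∑ i, (a i : ℕ)))) := by
  have hx : ∀ k, (0:ℝ) < (g k : ℝ) + 1 := fun k => by positivity
  have hX : (0:ℝ) < ∑ k, ((g k : ℝ) + 1) :=
    Finset.sum_pos (fun k _ => hx k) Finset.univ_nonempty
  have hterm_nonneg : ∀ (j : Fin (d + 2)) (a : ∀ i : Fin (d + 1), Fin (s (j.succAbove i))),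
      0 ≤ mufac (j.insertNth (s j - 1) (fun i => (a i : ℕ)))
        * (∏ i, (1 / ((g (j.succAbove i) : ℝ) + 1) ^ (s (j.succAbove i) - (a i : ℕ))))
        * (1 / (∑ k, ((g k : ℝ) + 1)) ^ (s j + ∑ i, (a i : ℕ))) := by
    intro j a
    refine mul_nonneg (mul_nonneg (mufac_nonneg _) ?_) (by positivity)
    exact Finset.prod_nonneg fun i _ => by positivity
  have h := congrArg ENNReal.ofReal (core s hs (fun k => (g k : ℝ) + 1) hx)
  rw [ENNReal.ofReal_prod_of_nonneg (fun k _ => by positivity)] at h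
  rw [ENNReal.ofReal_sum_of_nonneg
    (fun j _ => Finset.sum_nonneg fun a _ => hterm_nonneg j a)] at h
  calc ∏ k, 1 / ((g k : ℝ≥0∞) + 1) ^ s k
      = ∏ k, ENNReal.ofReal (1 / ((g k : ℝ) + 1) ^ s k) := by
        refine Finset.prod_congr rfl fun k _ => ?_
        rw [ofReal_one_div_pow (hx k), ofReal_natp]
    _ = ∑ j, ENNReal.ofReal (∑ a : (∀ i : Fin (d + 1), Fin (s (j.succAbove i))),
          mufac (j.insertNth (s j - 1) (fun i => (a i : ℕ)))
          * (∏ i, (1 / ((g (j.succAbove i) : ℝ) + 1) ^ (s (j.succAbove i) - (a i : ℕ))))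
          * (1 / (∑ k, ((g k : ℝ) + 1)) ^ (s j + ∑ i, (a i : ℕ)))) := h
    _ = _ := by
        refine Finset.sum_congr rfl fun j _ => ?_
        rw [ENNReal.ofReal_sum_of_nonneg (fun a _ => hterm_nonneg j a)]
        refine Finset.sum_congr rfl fun a _ => ?_
        rw [ENNReal.ofReal_mul (mul_nonneg (mufac_nonneg _)
          (Finset.prod_nonneg fun i _ => by positivity)),
          ENNReal.ofReal_mul (mufac_nonneg _), mul_assoc]
        congr 1
        congr 1
        · rw [ENNReal.ofReal_prod_of_nonneg (fun i _ => by positivity)]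
          refine Finset.prod_congr rfl fun i _ => ?_
          rw [ofReal_one_div_pow (hx _), ofReal_natp]
        · rw [ofReal_one_div_pow hX]
          congr 1
          congr 1
          rw [ENNReal.ofReal_sum_of_nonneg (fun k _ => (hx k).le)]
          exact Finset.sum_congr rfl fun k _ => ofReal_natp (g k)

lemma emain {d : ℕ} (s : Fin (d + 2) → ℕ) (hs : ∀ k, 1 ≤ s k) :
    ∏ j, ZE (s j)
    = ∑ j, ∑ a : (∀ i : Fin (d + 1), Fin (s (j.succAbove i))),
        ENNReal.ofReal (mufac (j.insertNth (s j - 1) (fun i => (a i : ℕ))))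
        * ∑' m, TlEterm (d + 2) (d + 1)
            (Fin.snoc (fun i : Fin (d + 1) => s (j.succAbove i) - (a i : ℕ))
              (s j + ∑ i, (a i : ℕ))) m := by
  rw [show (∏ j, ZE (s j)) = ∏ j : Fin (d + 2), ∑' m : ℕ, (1 / ((m : ℝ≥0∞) + 1) ^ s j)
    from rfl, prod_tsum_ennreal]
  rw [tsum_congr (fun g => core_lift s hs g)]
  rw [Summable.tsum_finsetSum (fun j _ => ENNReal.summable)]
  refine Finset.sum_congr rfl fun j _ => ?_
  rw [Summable.tsum_finsetSum (fun a _ => ENNReal.summable)]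
  refine Finset.sum_congr rfl fun a _ => ?_
  rw [ENNReal.tsum_mul_left]
  congr 1
  rw [← Equiv.tsum_eq (posEquiv d j)
    (fun m => TlEterm (d + 2) (d + 1)
      (Fin.snoc (fun i : Fin (d + 1) => s (j.succAbove i) - (a i : ℕ))
        (s j + ∑ i, (a i : ℕ))) m)]
  refine tsum_congr fun g => ?_
  rw [TlEterm_posEquiv d j _ g]
  congr 1
  · exact Finset.prod_congr rfl fun i _ => by rw [Fin.snoc_castSucc]
  · rw [Fin.snoc_last]

/-- **Corollary (decomposition of a product of zeta values).**
Let `r ≥ 2` (here `r = d + 2`) and let `s_1, …, s_r` be integers with `s_j ≥ 2`.  Then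
`∏_{j=1}^{r} ζ(s_j) = ∑_{j=1}^{r} ∑_{(a_k)_{k≠j}, 0 ≤ a_k ≤ s_k - 1}
   M_j · T_{r-1}(…, s_k - a_k, …, s_j + A_j)`,
where the arguments `s_k - a_k` run over `k ≠ j` in order (realized via
`Fin.succAbove` and `Fin.snoc`), `A_j = ∑_{k≠j} a_k` and
`M_j = (s_j + A_j - 1)!/((s_j - 1)! ∏_{k≠j} a_k!)`. -/
theorem zeta_product_decomposition (d : ℕ) (s' : Fin (d + 2) → ℕ)
    (hs' : ∀ j, 2 ≤ s' j) :
    (∏ j, zetaVal (s' j)) =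
      ∑ j : Fin (d + 2), ∑ a : (∀ i : Fin (d + 1), Fin (s' (j.succAbove i))),
        ((Nat.factorial (s' j + (∑ i : Fin (d + 1), (a i : ℕ)) - 1) : ℝ) /
            ((Nat.factorial (s' j - 1) *
              ∏ i : Fin (d + 1), Nat.factorial (a i) : ℕ) : ℝ)) *
          Tl (d + 2) (d + 1)
            (Fin.snoc (fun i : Fin (d + 1) => s' (j.succAbove i) - (a i : ℕ))
              (s' j + ∑ i : Fin (d + 1), (a i : ℕ))) := by
  classical
  have hs1 : ∀ k, 1 ≤ s' k := fun k => le_trans one_le_two (hs' k)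
  have hfin : ∏ j, ZE (s' j) ≠ ⊤ := by
    refine (ENNReal.prod_lt_top ?_).ne
    intro j _
    exact (ZE_ne_top (s' j) (hs' j)).lt_top
  have hmain := emain s' hs1
  have hterm_fin : ∀ j ∈ (univ : Finset (Fin (d + 2))),
      ∀ a ∈ (univ : Finset (∀ i : Fin (d + 1), Fin (s' (j.succAbove i)))),
      ENNReal.ofReal (mufac (j.insertNth (s' j - 1) (fun i => (a i : ℕ))))
        * ∑' m, TlEterm (d + 2) (d + 1)
            (Fin.snoc (fun i : Fin (d + 1) => s' (j.succAbove i) - (a i : ℕ))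
              (s' j + ∑ i, (a i : ℕ))) m ≠ ⊤ := by
    rw [hmain] at hfin
    intro j hj a ha
    have h1 := ENNReal.sum_lt_top.mp hfin.lt_top j hj
    exact (ENNReal.sum_lt_top.mp h1 a ha).ne
  -- coefficient identity
  have hcoef : ∀ (j : Fin (d + 2)) (a : ∀ i : Fin (d + 1), Fin (s' (j.succAbove i))),
      mufac (j.insertNth (s' j - 1) (fun i => (a i : ℕ)))
      = ((Nat.factorial (s' j + (∑ i : Fin (d + 1), (a i : ℕ)) - 1) : ℝ) /
          ((Nat.factorial (s' j - 1) *
            ∏ i : Fin (d + 1), Nat.factorial (a i) : ℕ) : ℝ)) := by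
    intro j a
    rw [mufac]
    congr 1
    · congr 1
      rw [Fin.sum_univ_succAbove (j.insertNth (s' j - 1) (fun i => (a i : ℕ))) j]
      rw [Fin.insertNth_apply_same]
      have h5 : ∀ i, j.insertNth (α := fun _ => ℕ) (s' j - 1) (fun i => (a i : ℕ))
          (j.succAbove i) = (a i : ℕ) :=
        fun i => by rw [Fin.insertNth_apply_succAbove]
      rw [Finset.sum_congr rfl fun i _ => h5 i]
      have := hs1 j
      congr 1
      omega
    · have h5 : ∀ i, j.insertNth (α := fun _ => ℕ) (s' j - 1) (fun i => (a i : ℕ))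
          (j.succAbove i) = (a i : ℕ) :=
        fun i => by rw [Fin.insertNth_apply_succAbove]
      calc (∏ k, ((j.insertNth (α := fun _ => ℕ) (s' j - 1) (fun i => (a i : ℕ)) k).factorial : ℝ))
          = ((j.insertNth (α := fun _ => ℕ) (s' j - 1) (fun i => (a i : ℕ)) j).factorial : ℝ)
            * ∏ i : Fin (d + 1),
              ((j.insertNth (α := fun _ => ℕ) (s' j - 1) (fun i => (a i : ℕ))
                (j.succAbove i)).factorial : ℝ) :=
            Fin.prod_univ_succAbove (n := d + 1) _ j
        _ = _ := by
            rw [Fin.insertNth_apply_same,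
              Finset.prod_congr rfl fun i _ =>
                congrArg (fun z => ((Nat.factorial z : ℕ) : ℝ)) (h5 i)]
            push_cast
            ring
  calc ∏ j, zetaVal (s' j)
      = (∏ j, ZE (s' j)).toReal := by
        rw [ENNReal.toReal_prod]
        exact Finset.prod_congr rfl fun j _ => zetaVal_eq (s' j)
    _ = _ := by
        rw [hmain]
        rw [ENNReal.toReal_sum (fun j hj => by
          refine (ENNReal.sum_lt_top.mpr ?_).ne
          intro a ha
          exact ((hterm_fin j hj a ha).lt_top))]
        refine Finset.sum_congr rfl fun j hj => ?_
        rw [ENNReal.toReal_sum (fun a ha => hterm_fin j hj a ha)]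
        refine Finset.sum_congr rfl fun a ha => ?_
        rw [ENNReal.toReal_mul, ENNReal.toReal_ofReal (mufac_nonneg _), hcoef j a,
          ← Tl_eq]
end

section
/- For any positive integers r and s, the Mordell–Tornheim value with all first r arguments equal to 1 satisfies T(1, 1, ..., 1; s) = r! · ζ(s + 1, 1, ..., 1), where there are r ones among the arguments of T and r − 1 ones following s + 1 in the multiple zeta value. -/
open Finset Equiv
open scoped ENNReal NNReal

lemma pfrac : ∀ (n : ℕ) (x : Fin n → ℝ≥0∞), (∀ i, x i ≠ 0) → (∀ i, x i ≠ ⊤) →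
    ∑ σ : Equiv.Perm (Fin n), ∏ k, (∑ l ∈ Finset.univ.filter (fun l => k ≤ l), x (σ l))⁻¹
      = ∏ i, (x i)⁻¹ := by
  intro n
  induction n with
  | zero => intro x _ _; simp
  | succ n ih =>
    intro x h0 ht
    set T := ∑ i, x i with hT
    have hT0 : T ≠ 0 := by
      intro h
      rw [hT, Finset.sum_eq_zero_iff] at h
      exact h0 0 (h 0 (Finset.mem_univ 0))
    have hTt : T ≠ ⊤ := by
      rw [hT]
      exact (ENNReal.sum_lt_top.2 fun i _ => (ht i).lt_top).ne
    have key : ∀ σ : Equiv.Perm (Fin (n+1)),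
        ∏ k, (∑ l ∈ Finset.univ.filter (fun l => k ≤ l), x (σ l))⁻¹
          = T⁻¹ * ∏ k : Fin n,
            (∑ l ∈ Finset.univ.filter (fun l => k ≤ l), x (σ l.succ))⁻¹ := by
      intro σ
      rw [Fin.prod_univ_succ]
      congr 1
      · congr 1
        rw [Finset.filter_true_of_mem (fun l _ => Fin.zero_le l)]
        exact Equiv.sum_comp σ x
      · refine Finset.prod_congr rfl fun k _ => ?_
        congr 1
        have himg : (Finset.univ.filter (fun l => k.succ ≤ l)) =
            (Finset.univ.filter (fun l => k ≤ l)).map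
              ⟨Fin.succ, Fin.succ_injective n⟩ := by
          ext l
          simp only [Finset.mem_filter, Finset.mem_univ, true_and, Finset.mem_map,
            Function.Embedding.coeFn_mk]
          constructor
          · intro hl
            have hl0 : l ≠ 0 := by
              rintro rfl
              exact Fin.succ_ne_zero k (Fin.le_zero_iff.1 hl)
            obtain ⟨j, rfl⟩ := Fin.eq_succ_of_ne_zero hl0
            exact ⟨j, Fin.succ_le_succ_iff.1 hl, rfl⟩
          · rintro ⟨j, hj, rfl⟩
            exact Fin.succ_le_succ_iff.2 hj
        rw [himg, Finset.sum_map]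
        rfl
    calc ∑ σ : Equiv.Perm (Fin (n+1)), ∏ k, (∑ l ∈ Finset.univ.filter (fun l => k ≤ l), x (σ l))⁻¹
        = T⁻¹ * ∑ σ : Equiv.Perm (Fin (n+1)), ∏ k : Fin n,
            (∑ l ∈ Finset.univ.filter (fun l => k ≤ l), x (σ l.succ))⁻¹ := by
          rw [Finset.mul_sum]; exact Finset.sum_congr rfl fun σ _ => key σ
      _ = T⁻¹ * ∑ p : Fin (n+1) × Equiv.Perm (Fin n), ∏ k : Fin n,
            (∑ l ∈ Finset.univ.filter (fun l => k ≤ l),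
              x ((Equiv.Perm.decomposeFin.symm p) l.succ))⁻¹ := by
          rw [← Equiv.sum_comp (Equiv.Perm.decomposeFin.symm)
            (fun σ : Equiv.Perm (Fin (n+1)) => ∏ k : Fin n,
              (∑ l ∈ Finset.univ.filter (fun l => k ≤ l), x (σ l.succ))⁻¹)]
      _ = T⁻¹ * ∑ i : Fin (n+1), ∑ τ : Equiv.Perm (Fin n), ∏ k : Fin n,
            (∑ l ∈ Finset.univ.filter (fun l => k ≤ l),
              (fun j => x (Equiv.swap 0 i j.succ)) (τ l))⁻¹ := by
          rw [Fintype.sum_prod_type]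
          congr 1
          refine Finset.sum_congr rfl fun i _ => Finset.sum_congr rfl fun τ _ => ?_
          refine Finset.prod_congr rfl fun k _ => ?_
          congr 1
          refine Finset.sum_congr rfl fun l _ => ?_
          rw [Equiv.Perm.decomposeFin_symm_apply_succ]
      _ = T⁻¹ * ∑ i : Fin (n+1), ∏ j : Fin n, (x (Equiv.swap 0 i j.succ))⁻¹ := by
          congr 1
          refine Finset.sum_congr rfl fun i _ => ?_
          exact ih (fun j => x (Equiv.swap 0 i j.succ)) (fun j => h0 _) (fun j => ht _)
      _ = T⁻¹ * ∑ i : Fin (n+1), ∏ l ∈ Finset.univ.erase i, (x l)⁻¹ := by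
          congr 1
          refine Finset.sum_congr rfl fun i _ => ?_
          have hinj : Function.Injective (fun j : Fin n => Equiv.swap 0 i j.succ) :=
            fun a b h => Fin.succ_injective n ((Equiv.swap 0 i).injective h)
          have himg : (Finset.univ : Finset (Fin n)).map ⟨_, hinj⟩ =
              (Finset.univ : Finset (Fin (n+1))).erase i := by
            ext l
            simp only [Finset.mem_map, Finset.mem_univ, true_and, Finset.mem_erase,
              Function.Embedding.coeFn_mk, and_true]
            constructor
            · rintro ⟨j, rfl⟩
              intro h
              have : j.succ = (0 : Fin (n+1)) := by
                have := (Equiv.swap 0 i).injective (h.trans (Equiv.swap_apply_left 0 i).symm)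
                exact this
              exact Fin.succ_ne_zero j this
            · intro hl
              have hw : Equiv.swap 0 i l ≠ 0 := by
                intro h
                have := (Equiv.swap 0 i).injective (h.trans (Equiv.swap_apply_right 0 i).symm)
                exact hl this
              obtain ⟨j, hj⟩ := Fin.eq_succ_of_ne_zero hw
              refine ⟨j, ?_⟩
              rw [← hj]
              simp
          rw [← himg, Finset.prod_map]
          rfl
      _ = T⁻¹ * ∑ i : Fin (n+1), x i * ∏ l, (x l)⁻¹ := by
          congr 1
          refine Finset.sum_congr rfl fun i _ => ?_
          have h1 := Finset.mul_prod_erase Finset.univ (fun l => (x l)⁻¹) (Finset.mem_univ i)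
          calc ∏ l ∈ Finset.univ.erase i, (x l)⁻¹
              = (x i * (x i)⁻¹) * ∏ l ∈ Finset.univ.erase i, (x l)⁻¹ := by
                rw [ENNReal.mul_inv_cancel (h0 i) (ht i), one_mul]
            _ = x i * ∏ l, (x l)⁻¹ := by rw [mul_assoc, h1]
      _ = ∏ i, (x i)⁻¹ := by
          rw [← Finset.sum_mul, ← hT, ← mul_assoc, ENNReal.inv_mul_cancel hT0 hTt, one_mul]

/-- Tail sum: `Nsum m j = m j + m (j+1) + ⋯ + m (r-1)`. -/
def Nsum {r : ℕ} (m : Fin r → ℕ) (j : Fin r) : ℕ :=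
  ∑ l ∈ Finset.univ.filter (fun l => j ≤ l), m l

lemma Nsum_zero {r : ℕ} (m : Fin (r+1) → ℕ) : Nsum m 0 = ∑ j, m j := by
  rw [Nsum, Finset.filter_true_of_mem (fun l _ => Fin.zero_le l)]

lemma Nsum_last {r : ℕ} (m : Fin (r+1) → ℕ) : Nsum m (Fin.last r) = m (Fin.last r) := by
  rw [Nsum]
  have : Finset.univ.filter (fun l => Fin.last r ≤ l) = {Fin.last r} := by
    ext l
    simp only [Finset.mem_filter, Finset.mem_univ, true_and, Finset.mem_singleton]
    constructor
    · intro h; exact le_antisymm (Fin.le_last l) h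
    · rintro rfl; exact le_refl _
  rw [this, Finset.sum_singleton]

lemma Nsum_rec {r : ℕ} (m : Fin (r+1) → ℕ) (i : Fin r) :
    Nsum m i.castSucc = m i.castSucc + Nsum m i.succ := by
  rw [Nsum, Nsum]
  have hins : Finset.univ.filter (fun l => i.castSucc ≤ l) =
      insert i.castSucc (Finset.univ.filter (fun l => i.succ ≤ l)) := by
    ext l
    simp only [Finset.mem_filter, Finset.mem_univ, true_and, Finset.mem_insert]
    rw [Fin.le_def, Fin.le_def]
    simp only [Fin.coe_castSucc, Fin.val_succ]
    constructor
    · intro h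
      rcases eq_or_lt_of_le h with h' | h'
      · left; exact (Fin.ext h'.symm : l = i.castSucc)
      · right; omega
    · rintro (rfl | h)
      · exact le_refl _
      · omega
  rw [hins, Finset.sum_insert]
  intro hmem
  rw [Finset.mem_filter] at hmem
  have := hmem.2
  rw [Fin.le_def] at this
  simp at this
lemma Nsum_pos {r : ℕ} (m : Fin r → ℕ) (hm : ∀ j, 0 < m j) (j : Fin r) : 0 < Nsum m j :=
  lt_of_lt_of_le (hm j) (Finset.single_le_sum (fun l _ => Nat.zero_le (m l))
    (by simp [Finset.mem_filter]))

lemma Nsum_strict_anti {r : ℕ} (m : Fin r → ℕ) (hm : ∀ j, 0 < m j) {i j : Fin r}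
    (hij : i < j) : Nsum m j < Nsum m i := by
  refine Finset.sum_lt_sum_of_subset ?_ (i := i) ?_ ?_ (hm i) (fun l _ _ => Nat.zero_le _)
  · intro l hl
    rw [Finset.mem_filter] at *
    exact ⟨hl.1, le_of_lt (lt_of_lt_of_le hij hl.2)⟩
  · simp
  · simp only [Finset.mem_filter, Finset.mem_univ, true_and, not_le]
    exact hij

/-- The bijection sending a positive tuple to its chain of tail sums. -/
noncomputable def chainEquiv (r : ℕ) :
    {m : Fin (r+1) → ℕ // ∀ j, 0 < m j} ≃
    {n : Fin (r+1) → ℕ // (∀ j, 0 < n j) ∧ ∀ i j : Fin (r+1), i < j → n j < n i} := by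
  refine Equiv.ofBijective
    (fun m => ⟨Nsum m.1, Nsum_pos m.1 m.2, fun i j hij => Nsum_strict_anti m.1 m.2 hij⟩) ⟨?_, ?_⟩
  · rintro ⟨m, hm⟩ ⟨m', hm'⟩ h
    have h' : ∀ j, Nsum m j = Nsum m' j := fun j =>
      congrFun (congrArg (fun z => (z : {n : Fin (r+1) → ℕ //
        (∀ j, 0 < n j) ∧ ∀ i j : Fin (r+1), i < j → n j < n i}).1) h) j
    refine Subtype.ext (funext fun j => ?_)
    show m j = m' j
    induction j using Fin.lastCases with
    | last => rw [← Nsum_last m, ← Nsum_last m', h']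
    | cast i =>
      have h1 := Nsum_rec m i
      have h2 := Nsum_rec m' i
      rw [h' i.castSucc, h' i.succ] at h1
      omega
  · rintro ⟨n, hpos, hdec⟩
    refine ⟨⟨fun j => Fin.lastCases (n (Fin.last r)) (fun i => n i.castSucc - n i.succ) j, ?_⟩, ?_⟩
    · intro j
      induction j using Fin.lastCases with
      | last => simpa using hpos (Fin.last r)
      | cast i =>
        simp only [Fin.lastCases_castSucc]
        exact Nat.sub_pos_of_lt (hdec _ _ Fin.castSucc_lt_succ)
    · refine Subtype.ext (funext fun j => ?_)
      simp only
      induction j using Fin.reverseInduction with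
      | last => rw [Nsum_last]; simp
      | cast i ihs =>
        rw [Nsum_rec, ihs]
        simp only [Fin.lastCases_castSucc]
        exact Nat.sub_add_cancel (le_of_lt (hdec _ _ Fin.castSucc_lt_succ))

/-- The term of the Mordell–Tornheim series `T(s_1, …, s_r; s)` with positive integer
arguments, indexed by tuples of positive integers `m_1, …, m_r`. -/
noncomputable def MTterm (r : ℕ) (s' : Fin r → ℕ) (s : ℕ)
    (m : {m : Fin r → ℕ // ∀ j, 0 < m j}) : ℝ :=
  1 / ((∏ j, (m.1 j : ℝ) ^ s' j) * ((∑ j, m.1 j : ℕ) : ℝ) ^ s)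

/-- The Mordell–Tornheim zeta value `T(s_1, …, s_r; s)`. -/
noncomputable def MT (r : ℕ) (s' : Fin r → ℕ) (s : ℕ) : ℝ :=
  ∑' m, MTterm r s' s m

/-- The term of the multiple zeta series `ζ(t_1, …, t_r)` (with `t_1 = t 0`), indexed
by strictly decreasing tuples of positive integers `n_1 > n_2 > ⋯ > n_r > 0`. -/
noncomputable def MZVterm (r : ℕ) (t : Fin r → ℕ)
    (n : {n : Fin r → ℕ // (∀ j, 0 < n j) ∧ ∀ i j : Fin r, i < j → n j < n i}) : ℝ :=
  ∏ j, 1 / ((n.1 j : ℝ) ^ t j)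

/-- The multiple zeta value `ζ(t_1, …, t_r)`. -/
noncomputable def MZV (r : ℕ) (t : Fin r → ℕ) : ℝ :=
  ∑' n, MZVterm r t n

/-- Precomposition by a permutation as an equiv of positive tuples. -/
def permPosEquiv {r : ℕ} (σ : Equiv.Perm (Fin r)) :
    {m : Fin r → ℕ // ∀ j, 0 < m j} ≃ {m : Fin r → ℕ // ∀ j, 0 < m j} where
  toFun m := ⟨m.1 ∘ σ, fun j => m.2 (σ j)⟩
  invFun m := ⟨m.1 ∘ σ.symm, fun j => m.2 (σ.symm j)⟩
  left_inv m := Subtype.ext (funext fun j => by simp)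
  right_inv m := Subtype.ext (funext fun j => by simp)

/-- **Corollary (Mordell).** For any positive integers `r` and `s`,
`T(1, 1, …, 1; s) = r! · ζ(s+1, 1, …, 1)`, with `r` ones among the arguments of `T`
and `r - 1` ones following `s + 1` in the multiple zeta value. -/
theorem mt_ones_eq_factorial_mzv (r s : ℕ) (hr : 0 < r) (hs : 0 < s) :
    MT r (fun _ => 1) s =
      (Nat.factorial r : ℝ) * MZV r (fun i => if (i : ℕ) = 0 then s + 1 else 1) := by
  obtain ⟨r, rfl⟩ := Nat.exists_eq_succ_of_ne_zero hr.ne'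
  set t : Fin (r+1) → ℕ := fun i => if (i : ℕ) = 0 then s + 1 else 1 with ht
  -- ENNReal versions of the terms
  let F : {m : Fin (r+1) → ℕ // ∀ j, 0 < m j} → ℝ≥0∞ :=
    fun m => ((((∑ j, m.1 j : ℕ)) : ℝ≥0∞) ^ s)⁻¹ * ∏ j, ((m.1 j : ℝ≥0∞))⁻¹
  let G : {n : Fin (r+1) → ℕ // (∀ j, 0 < n j) ∧
      ∀ i j : Fin (r+1), i < j → n j < n i} → ℝ≥0∞ :=
    fun n => ∏ j, (((n.1 j : ℝ≥0∞)) ^ t j)⁻¹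
  have hsum_pos : ∀ m : {m : Fin (r+1) → ℕ // ∀ j, 0 < m j}, 0 < ∑ j, m.1 j :=
    fun m => Finset.sum_pos (fun j _ => m.2 j) ⟨0, Finset.mem_univ 0⟩
  have hFne : ∀ m, F m ≠ ⊤ := by
    intro m
    refine ENNReal.mul_ne_top ?_ ?_
    · exact ENNReal.inv_ne_top.2 (pow_ne_zero _ (Nat.cast_ne_zero.2 (hsum_pos m).ne'))
    · exact (ENNReal.prod_lt_top fun j _ =>
        (ENNReal.inv_ne_top.2 (Nat.cast_ne_zero.2 (m.2 j).ne')).lt_top).ne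
  have hGne : ∀ n, G n ≠ ⊤ := by
    intro n
    exact (ENNReal.prod_lt_top fun j _ =>
      (ENNReal.inv_ne_top.2 (pow_ne_zero _ (Nat.cast_ne_zero.2 (n.2.1 j).ne'))).lt_top).ne
  -- transfer MT
  have hMT : MT (r+1) (fun _ => 1) s = (∑' m, F m).toReal := by
    rw [MT, ENNReal.tsum_toReal_eq hFne]
    refine tsum_congr fun m => ?_
    rw [MTterm, ENNReal.toReal_mul, ENNReal.toReal_inv, ENNReal.toReal_pow,
      ENNReal.toReal_natCast, ENNReal.toReal_prod]
    simp only [ENNReal.toReal_inv, ENNReal.toReal_natCast, pow_one, one_div, mul_inv,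
      Finset.prod_inv_distrib]
    ring
  -- transfer MZV
  have hMZV : MZV (r+1) t = (∑' n, G n).toReal := by
    rw [MZV, ENNReal.tsum_toReal_eq hGne]
    refine tsum_congr fun n => ?_
    rw [MZVterm, ENNReal.toReal_prod]
    refine Finset.prod_congr rfl fun j _ => ?_
    rw [ENNReal.toReal_inv, ENNReal.toReal_pow, ENNReal.toReal_natCast, one_div]
  -- the key identity in ℝ≥0∞
  have key : ∑' m, F m = ((Nat.factorial (r+1) : ℕ) : ℝ≥0∞) * ∑' n, G n := by
    -- the per-σ summand
    have hexpand : ∀ m : {m : Fin (r+1) → ℕ // ∀ j, 0 < m j},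
        F m = ∑ σ : Equiv.Perm (Fin (r+1)),
          ((((∑ j, m.1 j : ℕ)) : ℝ≥0∞) ^ s)⁻¹ *
            ∏ k, (((Nsum (m.1 ∘ σ) k : ℕ)) : ℝ≥0∞)⁻¹ := by
      intro m
      rw [← Finset.mul_sum]
      show ((((∑ j, m.1 j : ℕ)) : ℝ≥0∞) ^ s)⁻¹ * ∏ j, ((m.1 j : ℝ≥0∞))⁻¹ = _
      congr 1
      rw [← pfrac (r+1) (fun j => (m.1 j : ℝ≥0∞))
        (fun j => Nat.cast_ne_zero.2 (m.2 j).ne') (fun j => ENNReal.natCast_ne_top _)]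
      refine Finset.sum_congr rfl fun σ _ => Finset.prod_congr rfl fun k _ => ?_
      rw [Nsum, Nat.cast_sum]
      rfl
    rw [tsum_congr hexpand, Summable.tsum_finsetSum (fun σ _ => ENNReal.summable)]
    -- evaluate each σ-sum
    have hKG : ∀ m : {m : Fin (r+1) → ℕ // ∀ j, 0 < m j},
        ((((∑ j, m.1 j : ℕ)) : ℝ≥0∞) ^ s)⁻¹ * ∏ k, (((Nsum m.1 k : ℕ)) : ℝ≥0∞)⁻¹
          = G (chainEquiv r m) := by
      intro m
      have hN0 : Nsum m.1 0 = ∑ j, m.1 j := Nsum_zero m.1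
      have hG0 : G (chainEquiv r m) = ∏ j, (((Nsum m.1 j : ℕ) : ℝ≥0∞) ^ t j)⁻¹ := rfl
      rw [hG0, Fin.prod_univ_succ, Fin.prod_univ_succ]
      have ht0 : t 0 = s + 1 := by simp [ht]
      have hts : ∀ j : Fin r, t j.succ = 1 := by
        intro j
        simp [ht, Fin.val_succ]
      rw [ht0, hN0]
      have htail : ∀ j : Fin r,
          (((Nsum m.1 j.succ : ℕ) : ℝ≥0∞) ^ t j.succ)⁻¹
            = (((Nsum m.1 j.succ : ℕ) : ℝ≥0∞))⁻¹ := by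
        intro j; rw [hts j, pow_one]
      rw [Finset.prod_congr rfl (fun j _ => htail j)]
      have hNe0 : (((∑ j, m.1 j : ℕ)) : ℝ≥0∞) ≠ 0 := Nat.cast_ne_zero.2 (hsum_pos m).ne'
      have hNet : (((∑ j, m.1 j : ℕ)) : ℝ≥0∞) ≠ ⊤ := ENNReal.natCast_ne_top _
      rw [pow_succ, ENNReal.mul_inv (Or.inl (pow_ne_zero _ hNe0)) (Or.inr hNe0)]
      ring
    have hσ : ∀ σ : Equiv.Perm (Fin (r+1)),
        (∑' m : {m : Fin (r+1) → ℕ // ∀ j, 0 < m j}, ((((∑ j, m.1 j : ℕ)) : ℝ≥0∞) ^ s)⁻¹ *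
          ∏ k, (((Nsum (m.1 ∘ σ) k : ℕ)) : ℝ≥0∞)⁻¹) = ∑' n, G n := by
      intro σ
      have h1 : ∀ m : {m : Fin (r+1) → ℕ // ∀ j, 0 < m j},
          ((((∑ j, m.1 j : ℕ)) : ℝ≥0∞) ^ s)⁻¹ *
            ∏ k, (((Nsum (m.1 ∘ σ) k : ℕ)) : ℝ≥0∞)⁻¹
          = G (chainEquiv r (permPosEquiv σ m)) := by
        intro m
        rw [← hKG (permPosEquiv σ m)]
        have hsumeq : ∑ j, (permPosEquiv σ m).1 j = ∑ j, m.1 j := Equiv.sum_comp σ m.1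
        rw [hsumeq]
        rfl
      rw [tsum_congr h1]
      exact Equiv.tsum_eq ((permPosEquiv σ).trans (chainEquiv r)) G
    rw [Finset.sum_congr rfl (fun σ _ => hσ σ), Finset.sum_const, Finset.card_univ,
      Fintype.card_perm, Fintype.card_fin, nsmul_eq_mul]
  rw [hMT, hMZV, key, ENNReal.toReal_mul, ENNReal.toReal_natCast]
end
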